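/- Let M be a finite-dimensional module over a finite-dimensional K-algebra such that head(M) ≅ soc(M), and let N₁, …, N_k be pairwise nonisomorphic simple modules each occurring with composition multiplicity exactly 1 in M. Then either M ≅ N₁ ⊕ ⋯ ⊕ N_k, or there exists a simple module N not isomorphic to any of N₁, …, N_k with Hom(M, N) ≠ 0. -/

import Mathlib

open scoped Classical

universe u

/-- The `j`-th composition factor of a composition series `s` of submodules of `M` is
isomorphic to `N`. -/
def FactorIso (R : Type u) [Ring R] {M : Type u} [AddCommGroup M] [Module R M]
    (s : CompositionSeries (Submodule R M)) (j : Fin s.length)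
    (N : Type u) [AddCommGroup N] [Module R N] : Prop :=
  Nonempty ((↥(s j.succ) ⧸ Submodule.comap (s j.succ).subtype (s j.castSucc)) ≃ₗ[R] N)


section Aux
variable {R : Type u} [Ring R] {M : Type u} [AddCommGroup M] [Module R M]

lemma exists_series_between [IsNoetherian R M] [IsArtinian R M]
    {A B : Submodule R M} (hAB : A ≤ B) :
    ∃ s : CompositionSeries (Submodule R M), s.head = A ∧ s.last = B := by
  haveI : Nonempty (Set.Icc A B) := ⟨⟨A, le_refl A, hAB⟩⟩
  obtain ⟨a, h0, n, hmax, hcov⟩ :=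
    exists_covBy_seq_of_wellFoundedLT_wellFoundedGT (Set.Icc A B)
  have hrange : Set.range (OrderEmbedding.subtype (· ∈ Set.Icc A B)) = Set.Icc A B := by
    ext x
    constructor
    · rintro ⟨y, rfl⟩; exact y.2
    · intro hx; exact ⟨⟨x, hx⟩, rfl⟩
  have hoc : (Set.range (OrderEmbedding.subtype (· ∈ Set.Icc A B))).OrdConnected := by
    rw [hrange]; exact Set.ordConnected_Icc
  refine ⟨⟨n, fun i => (a i : Submodule R M), fun i => ?_⟩, ?_, ?_⟩
  · exact (hcov i i.2).image (OrderEmbedding.subtype (· ∈ Set.Icc A B)) hoc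
  · show (a 0 : Submodule R M) = A
    have h1 : (⟨A, le_refl A, hAB⟩ : Set.Icc A B) ≤ a 0 := (a 0).2.1
    exact le_antisymm (congrArg Subtype.val (le_antisymm (h0 h1) h1) ▸ le_rfl) (a 0).2.1
  · show (a n : Submodule R M) = B
    have h1 : a n ≤ (⟨B, hAB, le_refl B⟩ : Set.Icc A B) := (a n).2.2
    exact le_antisymm (a n).2.2 (hmax h1)

end Aux

section Aux2
variable {R : Type u} [Ring R] {M : Type u} [AddCommGroup M] [Module R M]

lemma soc_semisimple :
    IsSemisimpleModule R ↥(sSup {P : Submodule R M | IsAtom P} : Submodule R M) := by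
  set S : Submodule R M := sSup {P : Submodule R M | IsAtom P} with hS
  have hle : ∀ a ∈ {P : Submodule R M | IsAtom P}, a ≤ S := fun a ha => le_sSup ha
  apply isSemisimpleModule_of_isSemisimpleModule_submodule
    (s := {P : Submodule R M | IsAtom P}) (p := fun a => Submodule.comap S.subtype a)
  · intro a ha
    have e : (Submodule.comap S.subtype a) ≃ₗ[R] a := Submodule.comapSubtypeEquivOfLe (hle a ha)
    haveI : IsSimpleModule R a := isSimpleModule_iff_isAtom.mpr ha
    exact IsSemisimpleModule.congr e
  · apply Submodule.map_injective_of_injective (Submodule.injective_subtype S)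
    rw [Submodule.map_top, Submodule.range_subtype]
    have key : ∀ a ∈ {P : Submodule R M | IsAtom P},
        Submodule.map S.subtype (Submodule.comap S.subtype a) = a := fun a ha => by
      rw [Submodule.map_comap_subtype]; exact inf_eq_right.mpr (hle a ha)
    calc Submodule.map S.subtype
          (⨆ a ∈ {P : Submodule R M | IsAtom P}, Submodule.comap S.subtype a)
        = ⨆ a ∈ {P : Submodule R M | IsAtom P},
            Submodule.map S.subtype (Submodule.comap S.subtype a) := by
          simp_rw [Submodule.map_iSup]
      _ = ⨆ a ∈ {P : Submodule R M | IsAtom P}, a :=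
          iSup_congr fun a => iSup_congr fun ha => key a ha
      _ = S := by rw [hS, sSup_eq_iSup]

end Aux2

section Aux3
variable {R : Type u} [Ring R] {M : Type u} [AddCommGroup M] [Module R M]

lemma bot_factor_iso (T : Submodule R M) :
    Nonempty ((↥T ⧸ Submodule.comap T.subtype (⊥ : Submodule R M)) ≃ₗ[R] ↥T) :=
  ⟨Submodule.quotEquivOfEqBot _ (by rw [Submodule.comap_bot, Submodule.ker_subtype])⟩

lemma sup_factor_iso (a u : Submodule R M) (h : a ⊓ u = ⊥) :
    Nonempty ((↥(a ⊔ u) ⧸ Submodule.comap (a ⊔ u).subtype u) ≃ₗ[R] ↥a) := by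
  have e := (LinearMap.quotientInfEquivSupQuotient a u).symm
  rw [← Submodule.comap_inf, h] at e
  exact ⟨e.trans (Submodule.quotEquivOfEqBot _
    (by rw [Submodule.comap_bot, Submodule.ker_subtype]))⟩

lemma top_factor_iso (Q : Submodule R M) :
    Nonempty ((↥(⊤ : Submodule R M) ⧸
      Submodule.comap (⊤ : Submodule R M).subtype Q) ≃ₗ[R] (M ⧸ Q)) := by
  refine ⟨Submodule.Quotient.equiv _ _ Submodule.topEquiv ?_⟩
  refine le_antisymm ?_ ?_
  · rintro x ⟨y, hy, rfl⟩; exact hy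
  · intro x hx; exact ⟨⟨x, trivial⟩, hx, rfl⟩

lemma covby_sup_of_inf_bot {a u : Submodule R M} (ha : IsAtom a) (h : a ⊓ u = ⊥) :
    u ⋖ a ⊔ u := by
  obtain ⟨e⟩ := sup_factor_iso a u h
  haveI : IsSimpleModule R a := isSimpleModule_iff_isAtom.mpr ha
  exact (covBy_iff_quot_is_simple (le_sup_right : u ≤ a ⊔ u)).mpr (IsSimpleModule.congr e)

lemma exists_two_factor_series [IsNoetherian R M] [IsArtinian R M]
    {T Q : Submodule R M} (hT : IsAtom T) (hQ : IsCoatom Q) (hTQ : T ≤ Q) :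
    ∃ s : CompositionSeries (Submodule R M), s.head = ⊥ ∧ s.last = ⊤ ∧
      ∃ j0 j1 : Fin s.length, j0 ≠ j1 ∧
        Nonempty ((↥(s j0.succ) ⧸
          Submodule.comap (s j0.succ).subtype (s j0.castSucc)) ≃ₗ[R] ↥T) ∧
        Nonempty ((↥(s j1.succ) ⧸
          Submodule.comap (s j1.succ).subtype (s j1.castSucc)) ≃ₗ[R] (M ⧸ Q)) := by
  obtain ⟨t, ht1, ht2⟩ := exists_series_between hTQ
  set n := t.length with hn
  set h2 : Fin (n + 2) → Submodule R M := Fin.snoc t.toFun ⊤ with hh2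
  set g2 : Fin (n + 3) → Submodule R M := Fin.cons ⊥ h2 with hg2
  have hg2zero : g2 0 = ⊥ := rfl
  have hg2succ : ∀ i : Fin (n + 2), g2 i.succ = h2 i := fun i => by
    simp [hg2]
  have hh2cast : ∀ i : Fin (n + 1), h2 i.castSucc = t.toFun i := fun i => by
    simp [hh2]
  have hh2last : h2 (Fin.last (n + 1)) = ⊤ := by simp [hh2]
  have step : ∀ i : Fin (n + 2), g2 i.castSucc ⋖ g2 i.succ := by
    intro i
    refine Fin.cases ?_ ?_ i
    · have e1 : g2 (Fin.castSucc 0) = ⊥ := rfl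
      have e2 : g2 (Fin.succ 0) = T := by
        rw [hg2succ 0, show (0 : Fin (n+2)) = Fin.castSucc 0 from rfl, hh2cast]
        exact ht1
      rw [e1, e2]
      exact hT.bot_covBy
    · intro j
      have e1 : g2 (Fin.castSucc j.succ) = h2 j.castSucc := by
        rw [← Fin.succ_castSucc, hg2succ]
      rw [e1, hg2succ j.succ, hh2cast]
      refine Fin.lastCases ?_ ?_ j
      · rw [Fin.succ_last, hh2last]
        have hl : t.toFun (Fin.last n) = Q := ht2
        rw [hl]
        exact hQ.covBy_top
      · intro j'
        rw [Fin.succ_castSucc, hh2cast]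
        exact t.step j'
  have fact0 : ∀ j : Fin (n + 2), (j : ℕ) = 0 →
      Nonempty ((↥(g2 j.succ) ⧸
        Submodule.comap (g2 j.succ).subtype (g2 j.castSucc)) ≃ₗ[R] ↥T) := by
    intro j hj
    have e1 : g2 j.castSucc = ⊥ := by
      have hc : j.castSucc = (0 : Fin (n + 3)) := by ext; simpa using hj
      rw [hc]
      exact hg2zero
    have e2 : g2 j.succ = T := by
      have hc : j.succ = Fin.succ (0 : Fin (n + 2)) := by ext; simp [hj]
      rw [hc, hg2succ]
      exact (hh2cast 0).trans ht1
    rw [e1, e2]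
    exact bot_factor_iso T
  have fact1 : ∀ j : Fin (n + 2), (j : ℕ) = n + 1 →
      Nonempty ((↥(g2 j.succ) ⧸
        Submodule.comap (g2 j.succ).subtype (g2 j.castSucc)) ≃ₗ[R] (M ⧸ Q)) := by
    intro j hj
    have e1 : g2 j.castSucc = Q := by
      have hc : j.castSucc = Fin.succ (⟨n, by omega⟩ : Fin (n + 2)) := by ext; simpa using hj
      rw [hc, hg2succ]
      exact (hh2cast (Fin.last n)).trans ht2
    have e2 : g2 j.succ = ⊤ := by
      have hc : j.succ = Fin.succ (Fin.last (n + 1)) := by ext; simp [hj]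
      rw [hc, hg2succ]
      exact hh2last
    rw [e1, e2]
    exact top_factor_iso Q
  refine ⟨⟨n + 2, g2, step⟩, hg2zero, ?_, ⟨0, by show 0 < n + 2; omega⟩,
    ⟨n + 1, by show n + 1 < n + 2; omega⟩, ?_, ?_, ?_⟩
  · show g2 (Fin.last (n + 2)) = ⊤
    have hc : Fin.last (n + 2) = Fin.succ (Fin.last (n + 1)) := rfl
    rw [hc, hg2succ]
    exact hh2last
  · intro h
    have := congrArg Fin.val h
    simp at this
  · exact fact0 _ rfl
  · exact fact1 _ rfl

end Aux3

section Aux4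
variable {R : Type u} [Ring R] {M : Type u} [AddCommGroup M] [Module R M]

lemma semisimple_decomp [IsSemisimpleModule R M] [IsNoetherian R M] :
    ∃ (m : ℕ) (A : Fin m → Submodule R M) (s : CompositionSeries (Submodule R M))
      (hlen : s.length = m),
      s.head = ⊥ ∧ s.last = ⊤ ∧ (∀ j, IsAtom (A j)) ∧
      DirectSum.IsInternal A ∧
      ∀ j : Fin m,
        Nonempty ((↥(s.toFun (Fin.succ (Fin.cast hlen.symm j))) ⧸ Submodule.comap
          (s.toFun (Fin.succ (Fin.cast hlen.symm j))).subtype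
          (s.toFun (Fin.castSucc (Fin.cast hlen.symm j)))) ≃ₗ[R] ↥(A j)) := by
  obtain ⟨sfam, hind, hsup, hsimp⟩ :=
    IsSemisimpleModule.exists_sSupIndep_sSup_simples_eq_top R M
  have hfin : sfam.Finite := WellFoundedGT.finite_of_sSupIndep hind
  haveI := hfin.fintype
  set m := Fintype.card sfam with hm
  set e : Fin m ≃ sfam := (Fintype.equivFin sfam).symm with he
  set A : Fin m → Submodule R M := fun j => (e j : Submodule R M) with hA
  have hA_atom : ∀ j, IsAtom (A j) := fun j =>
    isSimpleModule_iff_isAtom.mp (hsimp _ (e j).2)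
  have hA_inj : Function.Injective A := fun a b hab => e.injective (Subtype.ext hab)
  have hind' : iSupIndep A := ((sSupIndep_iff sfam).mp hind).comp e.injective
  have hsup' : iSup A = ⊤ := by
    rw [hA]
    rw [Equiv.iSup_comp (e := e) (g := fun x : sfam => (x : Submodule R M))]
    rw [← sSup_eq_iSup', hsup]
  set f : Fin (m + 1) → Submodule R M :=
    fun j => (Finset.univ.filter fun l : Fin m => (l : ℕ) < (j : ℕ)).sup A with hf
  have hf0 : f 0 = ⊥ := by
    show (Finset.univ.filter fun l : Fin m => (l : ℕ) < ((0 : Fin (m+1)) : ℕ)).sup A = ⊥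
    have h : (Finset.univ.filter fun l : Fin m => (l : ℕ) < ((0 : Fin (m+1)) : ℕ)) = ∅ := by
      ext l; simp
    rw [h, Finset.sup_empty]
  have hflast : f (Fin.last m) = ⊤ := by
    show (Finset.univ.filter fun l : Fin m => (l : ℕ) < ((Fin.last m) : ℕ)).sup A = ⊤
    have h : (Finset.univ.filter fun l : Fin m => (l : ℕ) < ((Fin.last m) : ℕ))
        = Finset.univ := by
      ext l; simp [Fin.is_lt]
    rw [h, Finset.sup_univ_eq_iSup, hsup']
  have hfsucc : ∀ j : Fin m, f (Fin.succ j) = A j ⊔ f (Fin.castSucc j) := by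
    intro j
    show (Finset.univ.filter fun l : Fin m => (l : ℕ) < ((Fin.succ j) : ℕ)).sup A
      = A j ⊔ (Finset.univ.filter fun l : Fin m => (l : ℕ) < ((Fin.castSucc j) : ℕ)).sup A
    have h : (Finset.univ.filter fun l : Fin m => (l : ℕ) < ((Fin.succ j) : ℕ))
        = insert j (Finset.univ.filter fun l : Fin m => (l : ℕ) < ((Fin.castSucc j) : ℕ)) := by
      ext l
      simp only [Finset.mem_filter, Finset.mem_univ, true_and, Finset.mem_insert,
        Fin.val_succ, Fin.coe_castSucc, Fin.ext_iff]
      omega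
    rw [h, Finset.sup_insert]
  have hdisj : ∀ j : Fin m, A j ⊓ f (Fin.castSucc j) = ⊥ := by
    intro j
    have h1 : f (Fin.castSucc j) ≤ sSup (sfam \ {A j}) := by
      refine Finset.sup_le fun l hl => le_sSup ?_
      have hl' := (Finset.mem_filter.mp hl).2
      have hlj : l ≠ j := by
        intro h
        rw [h] at hl'
        simp at hl'
      exact ⟨(e l).2, fun hEq => hlj (hA_inj hEq)⟩
    exact disjoint_iff.mp ((hind (e j).2).mono_right h1)
  have step : ∀ j : Fin m, f (Fin.castSucc j) ⋖ f (Fin.succ j) := by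
    intro j
    rw [hfsucc j]
    exact covby_sup_of_inf_bot (hA_atom j) (hdisj j)
  refine ⟨m, A, ⟨m, f, step⟩, rfl, hf0, hflast, hA_atom,
    DirectSum.isInternal_submodule_of_iSupIndep_of_iSup_eq_top hind' hsup', ?_⟩
  intro j
  show Nonempty ((↥(f (Fin.succ j)) ⧸ Submodule.comap
    (f (Fin.succ j)).subtype (f (Fin.castSucc j))) ≃ₗ[R] ↥(A j))
  rw [hfsucc j]
  exact sup_factor_iso _ _ (hdisj j)

end Aux4

/-- Let `M` be a finite-dimensional module over a finite-dimensional `K`-algebra `R`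
with `head M ≅ soc M`, and `N₁,…,N_k` pairwise nonisomorphic simple modules, each of
composition multiplicity exactly `1` in `M`.  Then either `M ≅ N₁ ⊕ ⋯ ⊕ N_k` or there
is a simple module `N`, not isomorphic to any `Nᵢ`, with `Hom(M, N) ≠ 0`. -/
theorem stmt3 (K : Type u) [Field K] (R : Type u) [Ring R] [Algebra K R]
    [FiniteDimensional K R]
    (M : Type u) [AddCommGroup M] [Module R M] [Module K M] [IsScalarTower K R M]
    [FiniteDimensional K M]
    (k : ℕ) (N : Fin k → ModuleCat.{u} R)
    (hsimple : ∀ i, IsSimpleModule R (N i))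
    (hpair : ∀ i j, i ≠ j → IsEmpty ((N i : Type u) ≃ₗ[R] (N j : Type u)))
    (hheadsoc : Nonempty ((M ⧸ sInf {P : Submodule R M | IsCoatom P}) ≃ₗ[R]
      ↥(sSup {P : Submodule R M | IsAtom P} : Submodule R M)))
    (hmult : ∀ i, ∀ s : CompositionSeries (Submodule R M),
      s.head = ⊥ → s.last = ⊤ →
      (Finset.univ.filter (fun j : Fin s.length => FactorIso R s j (N i))).card = 1) :
    Nonempty (M ≃ₗ[R] DirectSum (Fin k) (fun i => (N i : Type u))) ∨
    ∃ N' : ModuleCat.{u} R, IsSimpleModule R N' ∧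
      (∃ f : M →ₗ[R] N', f ≠ 0) ∧
      ∀ i, IsEmpty ((N' : Type u) ≃ₗ[R] (N i : Type u)) := by
  classical
  haveI hNoeth : IsNoetherian R M := isNoetherian_of_tower K inferInstance
  haveI hArt : IsArtinian R M := isArtinian_of_tower K inferInstance
  -- trivial module case
  by_cases htriv : (⊤ : Submodule R M) = ⊥
  · haveI : Subsingleton M :=
      ⟨fun a b => by
        have ha : a ∈ (⊥ : Submodule R M) := htriv ▸ Submodule.mem_top
        have hb : b ∈ (⊥ : Submodule R M) := htriv ▸ Submodule.mem_top
        rw [Submodule.mem_bot] at ha hb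
        rw [ha, hb]⟩
    haveI hek : IsEmpty (Fin k) := by
      constructor
      intro i
      have hone := hmult i (RelSeries.singleton _ ⊥) rfl htriv.symm
      obtain ⟨x, _⟩ := Finset.card_eq_one.mp hone
      exact x.elim0
    haveI : Subsingleton (DirectSum (Fin k) (fun i => (N i : Type u))) :=
      ⟨fun a b => DFinsupp.ext fun i => isEmptyElim i⟩
    exact Or.inl ⟨LinearEquiv.ofBijective 0
      ⟨fun a b _ => Subsingleton.elim a b, fun y => ⟨0, Subsingleton.elim _ _⟩⟩⟩
  -- main case split
  by_cases hA : ∃ P : Submodule R M, IsCoatom P ∧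
      ∀ i, IsEmpty ((M ⧸ P) ≃ₗ[R] (N i : Type u))
  · obtain ⟨P, hP, hnone⟩ := hA
    refine Or.inr ⟨ModuleCat.of R (M ⧸ P), ?_, ⟨P.mkQ, ?_⟩, ?_⟩
    · show IsSimpleModule R (M ⧸ P)
      exact isSimpleModule_iff_isCoatom.mpr hP
    · intro h0
      have : P = ⊤ := by
        rw [← Submodule.ker_mkQ P, h0, LinearMap.ker_zero]
      exact hP.1 this
    · exact hnone
  have caseA : ∀ P : Submodule R M, IsCoatom P →
      ∃ i, Nonempty ((M ⧸ P) ≃ₗ[R] (N i : Type u)) := by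
    intro P hP
    by_contra hno
    push_neg at hno
    exact hA ⟨P, hP, fun i => hno i⟩
  set J : Submodule R M := sInf {P : Submodule R M | IsCoatom P} with hJdef
  set S : Submodule R M := sSup {P : Submodule R M | IsAtom P} with hSdef
  obtain ⟨φ⟩ := hheadsoc
  haveI hSsemi : IsSemisimpleModule R ↥S := soc_semisimple
  haveI : IsAtomic (Submodule R M) :=
    isAtomic_of_orderBot_wellFounded_lt (IsWellFounded.wf)
  have hJbot : J = ⊥ := by
    by_contra hJ
    obtain ⟨T, hT, hTJ⟩ := (eq_bot_or_exists_atom_le J).resolve_left hJ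
    have hTS : T ≤ S := le_sSup hT
    set Tc : Submodule R ↥S := Submodule.comap S.subtype T with hTc
    obtain ⟨c, hc⟩ := exists_isCompl Tc
    set π : ↥S →ₗ[R] ↥Tc := Tc.projectionOnto c hc with hπ
    have eTc : ↥Tc ≃ₗ[R] ↥T := Submodule.comapSubtypeEquivOfLe hTS
    set g : M →ₗ[R] ↥T := (eTc.toLinearMap.comp (π.comp φ.toLinearMap)).comp J.mkQ with hg
    have hgs : Function.Surjective g := by
      intro y
      obtain ⟨w, hw⟩ := Submodule.mkQ_surjective J (φ.symm ((eTc.symm y : ↥Tc) : ↥S))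
      refine ⟨w, ?_⟩
      rw [hg]
      simp only [LinearMap.comp_apply, LinearEquiv.coe_coe, hw,
        LinearEquiv.apply_symm_apply]
      rw [hπ, Submodule.projectionOnto_apply_left hc]
      simp
    haveI : IsSimpleModule R ↥T := isSimpleModule_iff_isAtom.mpr hT
    set P : Submodule R M := LinearMap.ker g with hPdef
    have hP : IsCoatom P := LinearMap.isCoatom_ker_of_surjective hgs
    obtain ⟨i, ⟨ψ⟩⟩ := caseA P hP
    have isoT : ↥T ≃ₗ[R] (N i : Type u) :=
      (g.quotKerEquivOfSurjective hgs).symm.trans ψ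
    have hTP : T ≤ P := le_trans hTJ (sInf_le hP)
    obtain ⟨s, hh, hl, j0, j1, hne, ⟨u0⟩, ⟨u1⟩⟩ := exists_two_factor_series hT hP hTP
    have hm0 : j0 ∈ Finset.univ.filter (fun j : Fin s.length => FactorIso R s j (N i)) :=
      Finset.mem_filter.mpr ⟨Finset.mem_univ _, ⟨u0.trans isoT⟩⟩
    have hm1 : j1 ∈ Finset.univ.filter (fun j : Fin s.length => FactorIso R s j (N i)) :=
      Finset.mem_filter.mpr ⟨Finset.mem_univ _, ⟨u1.trans ψ⟩⟩
    have hcard := hmult i s hh hl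
    have h2 : 1 < (Finset.univ.filter
        (fun j : Fin s.length => FactorIso R s j (N i))).card :=
      Finset.one_lt_card.mpr ⟨j0, hm0, j1, hm1, hne⟩
    omega
  -- M is semisimple
  have eM : M ≃ₗ[R] ↥S := (Submodule.quotEquivOfEqBot J hJbot).symm.trans φ
  haveI hMsemi : IsSemisimpleModule R M := IsSemisimpleModule.congr eM
  obtain ⟨m, A, s, hlen, hh, hl, hatom, hinternal, hfac⟩ :=
    semisimple_decomp (R := R) (M := M)
  have hfac' : ∀ j : Fin s.length,
      Nonempty ((↥(s.toFun (Fin.succ j)) ⧸ Submodule.comap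
        (s.toFun (Fin.succ j)).subtype (s.toFun (Fin.castSucc j))) ≃ₗ[R]
        ↥(A (Fin.cast hlen j))) := fun j => hfac (Fin.cast hlen j)
  have hAquot : ∀ j : Fin m, ∃ i, Nonempty (↥(A j) ≃ₗ[R] (N i : Type u)) := by
    intro j
    obtain ⟨c, hc⟩ := exists_isCompl (A j)
    have e1 : (M ⧸ c) ≃ₗ[R] ↥(A j) := Submodule.quotientEquivOfIsCompl _ _ hc.symm
    haveI : IsSimpleModule R ↥(A j) := isSimpleModule_iff_isAtom.mpr (hatom j)
    haveI : IsSimpleModule R (M ⧸ c) := IsSimpleModule.congr e1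
    have hcco : IsCoatom c := isSimpleModule_iff_isCoatom.mp this
    obtain ⟨i, ⟨ψ⟩⟩ := caseA c hcco
    exact ⟨i, ⟨e1.symm.trans ψ⟩⟩
  choose σ hσ using hAquot
  have hmem : ∀ j : Fin m, (finCongr hlen).symm j ∈ Finset.univ.filter
      (fun l : Fin s.length => FactorIso R s l (N (σ j))) := by
    intro j
    refine Finset.mem_filter.mpr ⟨Finset.mem_univ _, ?_⟩
    obtain ⟨w⟩ := hfac' ((finCongr hlen).symm j)
    obtain ⟨v⟩ := hσ j
    exact ⟨w.trans v⟩
  have hinj : Function.Injective σ := by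
    intro a b hab
    have hcard := hmult (σ a) s hh hl
    obtain ⟨x, hx⟩ := Finset.card_eq_one.mp hcard
    have ha := hmem a
    have hb := hmem b
    rw [← hab] at hb
    rw [hx, Finset.mem_singleton] at ha hb
    have : (finCongr hlen).symm a = (finCongr hlen).symm b := ha.trans hb.symm
    exact (finCongr hlen).symm.injective this
  have hsurj : Function.Surjective σ := by
    intro i
    have hcard := hmult i s hh hl
    obtain ⟨x, hx⟩ := Finset.card_eq_one.mp hcard
    have hxmem : x ∈ Finset.univ.filter
        (fun l : Fin s.length => FactorIso R s l (N i)) := by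
      rw [hx]; exact Finset.mem_singleton_self x
    have hFI : FactorIso R s x (N i) := (Finset.mem_filter.mp hxmem).2
    obtain ⟨v⟩ := hFI
    obtain ⟨w⟩ := hfac' x
    have hAiso : Nonempty (↥(A (Fin.cast hlen x)) ≃ₗ[R] (N i : Type u)) :=
      ⟨w.symm.trans v⟩
    refine ⟨Fin.cast hlen x, ?_⟩
    by_contra hne
    obtain ⟨v1⟩ := hσ (Fin.cast hlen x)
    obtain ⟨v2⟩ := hAiso
    exact (hpair _ _ hne).false (v1.symm.trans v2)
  set σe : Fin m ≃ Fin k := Equiv.ofBijective σ ⟨hinj, hsurj⟩ with hσe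
  have eInt : (DirectSum (Fin m) fun j => ↥(A j)) ≃ₗ[R] M :=
    LinearEquiv.ofBijective (DirectSum.coeLinearMap A) hinternal
  have hNi : ∀ i : Fin k, Nonempty (↥(A (σe.symm i)) ≃ₗ[R] (N i : Type u)) := by
    intro i
    obtain ⟨v⟩ := hσ (σe.symm i)
    have h : σ (σe.symm i) = i := σe.apply_symm_apply i
    rw [h] at v
    exact ⟨v⟩
  exact Or.inl ⟨eInt.symm.trans ((DirectSum.lequivCongrLeft R σe).trans
    (DFinsupp.mapRange.linearEquiv fun i => Classical.choice (hNi i)))⟩
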